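/- The dual diamond norm of a qc-map equals the sum of operator norms: for B = {B_1, …, B_n} ⊂ B_h(H) and φ_B^{qc}: X ↦ Σ_i Tr[X B_i] |e_i⟩⟨e_i| from B(H) to B(ℂⁿ), one has ‖φ_B^{qc}‖^⋄ = Σ_i ‖B_i‖. -/

import Mathlib

open scoped Matrix Kronecker ComplexOrder Matrix.Norms.L2Operator

noncomputable section

/-- Square complex matrices indexed by `ι`. -/
abbrev Mat (ι : Type) [Fintype ι] [DecidableEq ι] : Type := Matrix ι ι ℂ

/-- Linear maps between matrix algebras. -/
abbrev MatMap (ι κ : Type) [Fintype ι] [DecidableEq ι] [Fintype κ] [DecidableEq κ] : Type :=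
  Mat ι →ₗ[ℂ] Mat κ

variable {ι κ μ ν : Type} [Fintype ι] [DecidableEq ι] [Fintype κ] [DecidableEq κ]
  [Fintype μ] [DecidableEq μ] [Fintype ν] [DecidableEq ν]

/-- `φ ⊗ id_τ`, the amplification of `φ` with the identity on `Mat τ`. -/
def tensorId (φ : MatMap ι κ) (τ : Type) [Fintype τ] [DecidableEq τ] :
    Matrix (ι × τ) (ι × τ) ℂ →ₗ[ℂ] Matrix (κ × τ) (κ × τ) ℂ where
  toFun X := Matrix.of fun p q => φ (Matrix.of fun i j => X (i, p.2) (j, q.2)) p.1 q.1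
  map_add' X Y := by
    funext p q
    show φ (Matrix.of fun i j => (X + Y) (i, p.2) (j, q.2)) p.1 q.1 = _
    rw [show (Matrix.of fun i j => (X + Y) (i, p.2) (j, q.2))
        = (Matrix.of fun i j => X (i, p.2) (j, q.2))
          + (Matrix.of fun i j => Y (i, p.2) (j, q.2)) from rfl, map_add]
    rfl
  map_smul' c X := by
    funext p q
    show φ (Matrix.of fun i j => (c • X) (i, p.2) (j, q.2)) p.1 q.1 = _
    rw [show (Matrix.of fun i j => (c • X) (i, p.2) (j, q.2))
        = c • (Matrix.of fun i j => X (i, p.2) (j, q.2)) from rfl, map_smul]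
    rfl

/-- `φ` is Hermitian-preserving. -/
def IsHermitianPreserving (φ : MatMap ι κ) : Prop := ∀ X, (φ X)ᴴ = φ Xᴴ

/-- `φ` is completely positive: all amplifications by finite-dimensional identities
preserve positive semidefiniteness. -/
def IsCP (φ : MatMap ι κ) : Prop :=
  ∀ (l : ℕ) (X : Matrix (ι × Fin l) (ι × Fin l) ℂ), X.PosSemidef →
    (tensorId φ (Fin l) X).PosSemidef

/-- `φ` is trace-preserving. -/
def IsTP (φ : MatMap ι κ) : Prop := ∀ X, (φ X).trace = X.trace

/-- A channel is a completely positive trace-preserving map. -/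
def IsChannel (φ : MatMap ι κ) : Prop := IsCP φ ∧ IsTP φ

/-- Density operator. -/
def IsState (σ : Mat ι) : Prop := σ.PosSemidef ∧ σ.trace = 1

/-- The Choi matrix of `φ`. -/
def choiMatrix (φ : MatMap ι κ) : Matrix (κ × ι) (κ × ι) ℂ :=
  Matrix.of fun p q => φ (Matrix.single p.2 q.2 1) p.1 q.1

/-- The tracelike functional `s`. -/
def sFun (φ : MatMap ι ι) : ℂ :=
  ∑ i, ∑ j, φ (Matrix.single i j 1) i j

/-- The pairing `⟨ψ, φ⟩ = s(ψ ∘ φ)`. -/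
def pairing (ψ : MatMap κ ι) (φ : MatMap ι κ) : ℂ := sFun (ψ ∘ₗ φ)

/-- The erasure map `A ↦ Tr[A] σ`. -/
def erasure (σ : Mat κ) : MatMap ι κ :=
  (Matrix.traceLinearMap ι ℂ ℂ).smulRight σ

/-- The diamond norm, via its order-theoretic characterization. -/
noncomputable def diamondNorm (φ : MatMap ι κ) : ℝ :=
  sInf {r : ℝ | 0 < r ∧ ∃ α : MatMap ι κ, IsChannel α ∧
    IsCP ((r : ℂ) • α - φ) ∧ IsCP ((r : ℂ) • α + φ)}

/-- The dual diamond norm, via its order-theoretic characterization. -/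
noncomputable def dualDiamondNorm (ψ : MatMap ι κ) : ℝ :=
  sInf {r : ℝ | 0 < r ∧ ∃ σ : Mat κ, IsState σ ∧
    IsCP ((r : ℂ) • erasure (ι := ι) σ - ψ) ∧ IsCP ((r : ℂ) • erasure (ι := ι) σ + ψ)}

/-- The Hilbert–Schmidt (trace-duality) adjoint of `ψ`. -/
def adjointMap (ψ : MatMap ι κ) : MatMap κ ι where
  toFun A := Matrix.of fun i j => (A * ψ (Matrix.single j i 1)).trace
  map_add' A B := by funext i j; simp [Matrix.add_mul]
  map_smul' c A := by funext i j; simp [Matrix.smul_mul]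

/-- The cq-map associated with a family of operators. -/
def cqMap {n : ℕ} (A : Fin n → Mat ι) : MatMap (Fin n) ι where
  toFun X := ∑ i, X i i • A i
  map_add' X Y := by simp [Matrix.add_apply, add_smul, Finset.sum_add_distrib]
  map_smul' c X := by simp [Matrix.smul_apply, smul_smul, Finset.smul_sum]

/-- The qc-map associated with a family of operators. -/
def qcMap {n : ℕ} (B : Fin n → Mat ι) : MatMap ι (Fin n) where
  toFun X := Matrix.diagonal fun i => (X * B i).trace
  map_add' X Y := by
    funext i j
    by_cases h : i = j <;>
      simp [Matrix.add_mul, Matrix.diagonal, Matrix.of_apply, h]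
  map_smul' c X := by
    funext i j
    by_cases h : i = j <;>
      simp [Matrix.smul_mul, Matrix.diagonal, Matrix.of_apply, h]

/-- A POVM with `n` outcomes. -/
def IsPOVM {n : ℕ} (M : Fin n → Mat ι) : Prop :=
  (∀ i, (M i).PosSemidef) ∧ ∑ i, M i = 1

/-- An ensemble: probabilities with states. -/
def IsEnsemble {n : ℕ} (lam : Fin n → ℝ) (σ : Fin n → Mat ι) : Prop :=
  (∀ i, 0 < lam i) ∧ (∑ i, lam i = 1) ∧ ∀ i, IsState (σ i)

/-- Optimal success probability of guessing among the states of an ensemble. -/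
noncomputable def pSucc {n : ℕ} (lam : Fin n → ℝ) (σ : Fin n → Mat ι) : ℝ :=
  sSup {r : ℝ | ∃ M : Fin n → Mat ι, IsPOVM M ∧
    r = ∑ i, lam i * ((M i * σ i).trace).re}

/-- Trace norm `‖A‖₁ = Tr √(AᴴA)`. -/
noncomputable def traceNorm (A : Mat ι) : ℝ :=
  (((Matrix.posSemidef_conjTranspose_mul_self A).1.eigenvectorUnitary : Mat ι) *
    Matrix.diagonal (((↑) : ℝ → ℂ) ∘ Real.sqrt ∘ (Matrix.posSemidef_conjTranspose_mul_self A).1.eigenvalues) *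
    (star (Matrix.posSemidef_conjTranspose_mul_self A).1.eigenvectorUnitary : Mat ι)).trace.re

/-- Le Cam deficiency of `Φ` with respect to `Ψ`. -/
noncomputable def deficiency (Φ : MatMap ι κ) (Ψ : MatMap ι μ) : ℝ :=
  sInf {r : ℝ | ∃ α : MatMap μ κ, IsChannel α ∧ r = diamondNorm (Φ - α ∘ₗ Ψ)}

section AuxLemmas

open Matrix
open scoped ComplexOrder

namespace DDNAux

/-- The positive-semidefinite diagonal entries are nonneg. -/
lemma psd_diag_nonneg {m : Type} [Fintype m] [DecidableEq m] {M : Matrix m m ℂ}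
    (hM : M.PosSemidef) (i : m) : 0 ≤ M i i := by
  have h := hM.dotProduct_mulVec_nonneg (Pi.single i 1)
  have hs : (star (Pi.single i (1 : ℂ)) : m → ℂ) = Pi.single i 1 := by
    ext a
    by_cases hai : a = i <;> simp [Pi.single_apply, hai]
  rw [hs] at h
  simpa [dotProduct, Matrix.mulVec_single, Pi.single_apply, ite_mul, one_mul,
    zero_mul, Finset.sum_ite_eq] using h

/-- Conjugation factor appearing in the amplified qc-map. -/
def ampH {n k : ℕ} (l : ℕ) (D : Fin n → Mat (Fin k)) (i₀ : Fin n) (r : Fin k) :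
    Matrix (Fin n × Fin l) (Fin k × Fin l) ℂ :=
  Matrix.of fun p q => if p.1 = i₀ ∧ p.2 = q.2 then D i₀ r q.1 else 0

lemma tensorId_qcMap_eq {n k l : ℕ} (C : Fin n → Mat (Fin k)) (D : Fin n → Mat (Fin k))
    (hD : ∀ i, C i = (D i)ᴴ * D i) (X : Matrix (Fin k × Fin l) (Fin k × Fin l) ℂ) :
    tensorId (qcMap C) (Fin l) X
      = ∑ i₀ : Fin n, ∑ r : Fin k, ampH l D i₀ r * X * (ampH l D i₀ r)ᴴ := by
  apply Matrix.ext
  rintro ⟨i, a⟩ ⟨j, b⟩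
  show (qcMap C) (Matrix.of fun s t => X (s, a) (t, b)) i j = _
  simp only [qcMap, LinearMap.coe_mk, AddHom.coe_mk, Matrix.sum_apply, Matrix.mul_apply,
    Matrix.conjTranspose_apply, ampH, Matrix.of_apply, Matrix.diagonal_apply, Matrix.trace,
    Matrix.diag]
  by_cases hij : i = j
  · subst hij
    rw [if_pos rfl, hD i]
    simp only [Fintype.sum_prod_type, ite_and, apply_ite (star : ℂ → ℂ), star_zero,
      ite_mul, mul_ite, zero_mul, mul_zero, Finset.sum_ite_eq, Finset.sum_ite_eq',
      Finset.mem_univ, if_true, Matrix.mul_apply, Matrix.conjTranspose_apply,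
      Finset.sum_ite_irrel, Finset.sum_const_zero]
    simp only [Finset.mul_sum, Finset.sum_mul]
    have sum_rot : ∀ f : Fin k → Fin k → Fin k → ℂ,
        (∑ s, ∑ t, ∑ r, f s t r) = ∑ r, ∑ t, ∑ s, f s t r := by
      intro f
      rw [Finset.sum_comm]
      have h1 : (∑ t : Fin k, ∑ s : Fin k, ∑ r : Fin k, f s t r)
          = ∑ t : Fin k, ∑ r : Fin k, ∑ s : Fin k, f s t r :=
        Finset.sum_congr rfl fun t _ => Finset.sum_comm
      rw [h1]
      exact Finset.sum_comm
    rw [sum_rot fun s t r => X (s, a) (t, b) * (star (D i r t) * D i r s)]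
    refine Finset.sum_congr rfl fun r _ => Finset.sum_congr rfl fun t _ =>
      Finset.sum_congr rfl fun s _ => ?_
    ring
  · rw [if_neg hij]
    simp only [Fintype.sum_prod_type, ite_and, apply_ite (star : ℂ → ℂ), star_zero,
      ite_mul, mul_ite, zero_mul, mul_zero, Finset.sum_ite_eq, Finset.sum_ite_eq',
      Finset.mem_univ, if_true, hij, Finset.sum_ite_irrel, Finset.sum_const_zero,
      if_false]

/-- Finite sums of PSD matrices are PSD. -/
lemma psd_sum {m α : Type} [Fintype m] [DecidableEq m] [Fintype α] (f : α → Matrix m m ℂ)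
    (h : ∀ a, (f a).PosSemidef) : (∑ a, f a).PosSemidef := by
  classical
  refine Finset.sum_induction f _ (fun x y hx hy => hx.add hy) Matrix.PosSemidef.zero
    (fun a _ => h a)

lemma isCP_qcMap {n k : ℕ} {C : Fin n → Mat (Fin k)} (hC : ∀ i, (C i).PosSemidef) :
    IsCP (qcMap C) := by
  have h : ∀ i, ∃ D : Mat (Fin k), C i = Dᴴ * D := fun i =>
    by open scoped MatrixOrder in
      exact CStarAlgebra.nonneg_iff_eq_star_mul_self.1 (Matrix.nonneg_iff_posSemidef.2 (hC i))
  choose D hD using h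
  intro l X hX
  rw [tensorId_qcMap_eq C D hD X]
  exact psd_sum _ fun i₀ => psd_sum _ fun r => hX.mul_mul_conjTranspose_same _

lemma isCP_posSemidef {n k : ℕ} {φ : MatMap (Fin k) (Fin n)} (h : IsCP φ)
    {X : Mat (Fin k)} (hX : X.PosSemidef) : (φ X).PosSemidef := by
  set X' : Matrix (Fin k × Fin 1) (Fin k × Fin 1) ℂ := Matrix.of fun p q => X p.1 q.1 with hX'
  have hX'psd : X'.PosSemidef := by
    rw [Matrix.posSemidef_iff_dotProduct_mulVec]
    constructor
    · apply Matrix.ext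
      rintro ⟨i, a⟩ ⟨j, b⟩
      simpa [X', Matrix.conjTranspose_apply] using congrFun (congrFun hX.1 i) j
    · intro w
      have e : star w ⬝ᵥ X' *ᵥ w
          = star (fun i => w (i, 0)) ⬝ᵥ X *ᵥ (fun i => w (i, 0)) := by
        simp [X', dotProduct, Matrix.mulVec, Fintype.sum_prod_type, Fin.sum_univ_one,
          Finset.mul_sum]
      rw [e]
      exact hX.dotProduct_mulVec_nonneg _
  have hres := h 1 X' hX'psd
  have key : ∀ (a b : Fin 1) (i j : Fin n), tensorId φ (Fin 1) X' (i, a) (j, b) = φ X i j := by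
    intro a b i j
    show φ (Matrix.of fun s t => X' (s, a) (t, b)) i j = φ X i j
    have hXe : (Matrix.of fun s t => X' (s, a) (t, b)) = X := by
      ext s t
      simp [X']
    rw [hXe]
  rw [Matrix.posSemidef_iff_dotProduct_mulVec]
  constructor
  · apply Matrix.ext
    rintro i j
    have h2 := congrFun (congrFun hres.1 (i, (0 : Fin 1))) (j, 0)
    rw [Matrix.conjTranspose_apply, key, key] at h2
    rw [Matrix.conjTranspose_apply]
    exact h2
  · intro v
    have h2 := hres.dotProduct_mulVec_nonneg (fun p => v p.1)
    have e : star (fun p : Fin n × Fin 1 => v p.1) ⬝ᵥ (tensorId φ (Fin 1) X') *ᵥ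
        (fun p : Fin n × Fin 1 => v p.1) = star v ⬝ᵥ (φ X) *ᵥ v := by
      simp [dotProduct, Matrix.mulVec, Fintype.sum_prod_type, Fin.sum_univ_one, key,
        Finset.mul_sum]
    rwa [e] at h2

lemma quad_real {k : ℕ} {B : Mat (Fin k)} (hB : B.IsHermitian) (v : Fin k → ℂ) :
    (starRingEnd ℂ) (star v ⬝ᵥ B *ᵥ v) = star v ⬝ᵥ B *ᵥ v := by
  have hsym := (Matrix.isHermitian_iff_isSymmetric).1 hB
  set x : EuclideanSpace ℂ (Fin k) := (WithLp.equiv 2 _).symm v with hx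
  have e : star v ⬝ᵥ B *ᵥ v = inner ℂ x (Matrix.toEuclideanLin B x) := by
    rw [EuclideanSpace.inner_eq_star_dotProduct, dotProduct_comm]
    rfl
  rw [e, inner_conj_symm]
  exact hsym x x

lemma quad_abs_le {k : ℕ} (B : Mat (Fin k)) (v : Fin k → ℂ) :
    ‖star v ⬝ᵥ B *ᵥ v‖ ≤ ‖B‖ * (star v ⬝ᵥ v).re := by
  set x : EuclideanSpace ℂ (Fin k) := (WithLp.equiv 2 _).symm v with hx
  have e : star v ⬝ᵥ B *ᵥ v = inner ℂ x (Matrix.toEuclideanLin B x) := by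
    rw [EuclideanSpace.inner_eq_star_dotProduct, dotProduct_comm]
    rfl
  have e2 : (star v ⬝ᵥ v).re = ‖x‖ ^ 2 := by
    have : (star v ⬝ᵥ v) = inner ℂ x x := by
      rw [EuclideanSpace.inner_eq_star_dotProduct, dotProduct_comm]
      rfl
    rw [this, inner_self_eq_norm_sq_to_K]
    simp [← Complex.ofReal_pow]
  have h1 : ‖(inner ℂ x (Matrix.toEuclideanLin B x) : ℂ)‖
      ≤ ‖x‖ * ‖Matrix.toEuclideanLin B x‖ := by
    exact norm_inner_le_norm x _
  have h2 : ‖Matrix.toEuclideanLin B x‖ ≤ ‖B‖ * ‖x‖ := by exact B.l2_opNorm_mulVec x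
  rw [e, e2]
  calc ‖(inner ℂ x (Matrix.toEuclideanLin B x) : ℂ)‖
      ≤ ‖x‖ * (‖B‖ * ‖x‖) := le_trans h1 (by
        have := mul_le_mul_of_nonneg_left h2 (norm_nonneg x)
        exact this)
    _ = ‖B‖ * ‖x‖ ^ 2 := by ring

lemma posSemidef_smul_one_add {k : ℕ} {B : Mat (Fin k)} (hB : B.IsHermitian) {c : ℝ}
    (hc : ‖B‖ ≤ c) : (((c : ℂ) • (1 : Mat (Fin k)) + B)).PosSemidef := by
  rw [Matrix.posSemidef_iff_dotProduct_mulVec]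
  constructor
  · have h1 : ((c : ℂ) • (1 : Mat (Fin k))).IsHermitian := by
      unfold Matrix.IsHermitian
      rw [Matrix.conjTranspose_smul, Matrix.conjTranspose_one]
      simp
    exact h1.add hB
  · intro v
    have hq := quad_real hB v
    have habs := quad_abs_le B v
    rw [Matrix.add_mulVec, dotProduct_add, Matrix.smul_mulVec,
      Matrix.one_mulVec, dotProduct_smul]
    set q := star v ⬝ᵥ B *ᵥ v with hqdef
    set s := star v ⬝ᵥ v with hsdef
    have hsre : s = ((s.re : ℝ) : ℂ) := by
      have : (starRingEnd ℂ) s = s := by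
        simp [hsdef, dotProduct, Finset.mul_sum, map_sum, mul_comm]
      rw [Complex.conj_eq_iff_re] at this
      exact this.symm
    have hqre : q = ((q.re : ℝ) : ℂ) := by
      rw [Complex.conj_eq_iff_re] at hq
      exact hq.symm
    rw [hsre, hqre, smul_eq_mul, ← Complex.ofReal_mul, ← Complex.ofReal_add]
    rw [Complex.zero_le_real]
    have h3 : |q.re| ≤ ‖B‖ * s.re := le_trans (Complex.abs_re_le_norm q) habs
    have h4 : 0 ≤ s.re := by
      have e4 : s = ((∑ i, Complex.normSq (v i) : ℝ) : ℂ) := by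
        simp [hsdef, dotProduct, mul_comm, Complex.mul_conj, Complex.ofReal_sum]
      rw [e4, Complex.ofReal_re]
      exact Finset.sum_nonneg fun i _ => Complex.normSq_nonneg _
    linarith [h3, neg_abs_le q.re, mul_le_mul_of_nonneg_right hc h4]

lemma norm_le_of_eigs {k : ℕ} {B : Mat (Fin k)} (hB : B.IsHermitian) {M : ℝ} (hM : 0 ≤ M)
    (h : ∀ j, |hB.eigenvalues j| ≤ M) : ‖B‖ ≤ M := by
  rw [Matrix.l2_opNorm_def]
  refine ContinuousLinearMap.opNorm_le_bound _ hM fun x => ?_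
  set b := hB.eigenvectorBasis with hb
  have hsym := (Matrix.isHermitian_iff_isSymmetric).1 hB
  have hTb : ∀ j, Matrix.toEuclideanLin B (b j) = ((hB.eigenvalues j : ℝ) : ℂ) • b j := by
    intro j
    apply (WithLp.equiv 2 (Fin k → ℂ)).injective
    change B *ᵥ (b j).ofLp = WithLp.equiv 2 (Fin k → ℂ) (((hB.eigenvalues j : ℝ) : ℂ) • b j)
    have := hB.mulVec_eigenvectorBasis j
    simpa using this
  have key : ∀ j, b.repr (Matrix.toEuclideanLin B x) j
      = ((hB.eigenvalues j : ℝ) : ℂ) * b.repr x j := by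
    intro j
    rw [b.repr_apply_apply, b.repr_apply_apply, ← hsym (b j) x, hTb j, inner_smul_left,
      Complex.conj_ofReal]
  show ‖Matrix.toEuclideanLin B x‖ ≤ M * ‖x‖
  rw [← LinearIsometryEquiv.norm_map b.repr, ← LinearIsometryEquiv.norm_map b.repr x]
  rw [EuclideanSpace.norm_eq, EuclideanSpace.norm_eq]
  have hsum : ∑ j, ‖b.repr (Matrix.toEuclideanLin B x) j‖ ^ 2
      ≤ M ^ 2 * ∑ j, ‖b.repr x j‖ ^ 2 := by
    rw [Finset.mul_sum]
    refine Finset.sum_le_sum fun j _ => ?_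
    rw [key j]
    rw [norm_mul]
    have h1 : ‖(((hB.eigenvalues j : ℝ)) : ℂ)‖ = |hB.eigenvalues j| := by
      simp
    rw [mul_pow, h1]
    have h2 : |hB.eigenvalues j| ^ 2 ≤ M ^ 2 := by
      have := h j
      nlinarith [abs_nonneg (hB.eigenvalues j)]
    nlinarith [norm_nonneg (b.repr x j), sq_nonneg (‖b.repr x j‖)]
  calc Real.sqrt (∑ j, ‖b.repr (Matrix.toEuclideanLin B x) j‖ ^ 2)
      ≤ Real.sqrt (M ^ 2 * ∑ j, ‖b.repr x j‖ ^ 2) := Real.sqrt_le_sqrt hsum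
    _ = M * Real.sqrt (∑ j, ‖b.repr x j‖ ^ 2) := by
        rw [Real.sqrt_mul (sq_nonneg M), Real.sqrt_sq hM]

lemma trace_vecMulVec_mul {k : ℕ} (v : Fin k → ℂ) (B : Mat (Fin k)) :
    (Matrix.vecMulVec v (star v) * B).trace = star v ⬝ᵥ B *ᵥ v := by
  simp only [Matrix.trace, Matrix.diag, Matrix.mul_apply, Matrix.vecMulVec_apply,
    dotProduct, Matrix.mulVec, Pi.star_apply, Finset.mul_sum, Finset.sum_mul]
  rw [Finset.sum_comm]
  refine Finset.sum_congr rfl fun b _ => Finset.sum_congr rfl fun a _ => ?_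
  ring

lemma posSemidef_vecMulVec {k : ℕ} (v : Fin k → ℂ) :
    (Matrix.vecMulVec v (star v)).PosSemidef := by
  have h : Matrix.vecMulVec v (star v) = (Matrix.replicateRow (Fin 1) (star v))ᴴ
      * Matrix.replicateRow (Fin 1) (star v) := by
    rw [Matrix.conjTranspose_replicateRow, star_star]
    exact Matrix.vecMulVec_eq (Fin 1) _ _
  rw [h]
  exact Matrix.posSemidef_conjTranspose_mul_self _

lemma exists_unit_quad {k : ℕ} (hk : 0 < k) {B : Mat (Fin k)} (hB : B.IsHermitian) :
    ∃ v : Fin k → ℂ, star v ⬝ᵥ v = 1 ∧ ∃ lam : ℝ,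
      star v ⬝ᵥ B *ᵥ v = (lam : ℂ) ∧ ‖B‖ ≤ |lam| := by
  haveI : Nonempty (Fin k) := ⟨⟨0, hk⟩⟩
  obtain ⟨j₀, -, hj₀⟩ := Finset.exists_max_image (Finset.univ : Finset (Fin k))
    (fun j => |hB.eigenvalues j|) Finset.univ_nonempty
  set v : Fin k → ℂ := ⇑(hB.eigenvectorBasis j₀) with hv
  have h1 : (star v ⬝ᵥ v : ℂ) = 1 := by
    have e : (star v ⬝ᵥ v : ℂ) = inner (𝕜 := ℂ) (hB.eigenvectorBasis j₀)
        (hB.eigenvectorBasis j₀) := by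
      rw [EuclideanSpace.inner_eq_star_dotProduct, dotProduct_comm]
    rw [e, inner_self_eq_norm_sq_to_K, hB.eigenvectorBasis.orthonormal.1 j₀]
    norm_num
  refine ⟨v, h1, hB.eigenvalues j₀, ?_, ?_⟩
  · have e2 : B *ᵥ v = fun a => (hB.eigenvalues j₀ : ℂ) * v a := by
      rw [hv, hB.mulVec_eigenvectorBasis]
      funext a
      simp [Complex.real_smul]
    rw [e2]
    have : (star v ⬝ᵥ fun a => (hB.eigenvalues j₀ : ℂ) * v a)
        = (hB.eigenvalues j₀ : ℂ) * (star v ⬝ᵥ v) := by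
      simp [dotProduct, Finset.mul_sum]
      exact Finset.sum_congr rfl fun a _ => by ring
    rw [this, h1, mul_one]
  · exact norm_le_of_eigs hB (abs_nonneg _) fun j => hj₀ j (Finset.mem_univ j)

lemma qcMap_neg {n k : ℕ} (B : Fin n → Mat (Fin k)) :
    qcMap (fun i => -B i) = -qcMap B := by
  apply LinearMap.ext
  intro X
  apply Matrix.ext
  intro i j
  show Matrix.diagonal (fun i => (X * -B i).trace) i j = -(Matrix.diagonal (fun i => (X * B i).trace) i j)
  by_cases hij : i = j <;>
    simp [qcMap, Matrix.diagonal_apply, hij, Matrix.mul_neg]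

lemma comb_eq {n k : ℕ} (d : Fin n → ℝ) (r : ℝ) (B : Fin n → Mat (Fin k)) :
    (r : ℂ) • erasure (ι := Fin k) (Matrix.diagonal fun i => ((d i : ℝ) : ℂ)) + qcMap B
      = qcMap (fun i => ((r * d i : ℝ) : ℂ) • (1 : Mat (Fin k)) + B i) := by
  apply LinearMap.ext
  intro X
  apply Matrix.ext
  intro i j
  have htr : ∀ i, (X * (((r * d i : ℝ) : ℂ) • (1 : Mat (Fin k)) + B i)).trace
      = ((r * d i : ℝ) : ℂ) * X.trace + (X * B i).trace := by
    intro i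
    rw [Matrix.mul_add, Matrix.trace_add, Matrix.mul_smul, Matrix.mul_one, Matrix.trace_smul]
    simp
  have he : (erasure (ι := Fin k) (Matrix.diagonal fun i => ((d i : ℝ) : ℂ))) X
      = X.trace • Matrix.diagonal (fun i => ((d i : ℝ) : ℂ)) := rfl
  have hq : ∀ (C : Fin n → Mat (Fin k)),
      (qcMap C) X = Matrix.diagonal (fun i' => (X * C i').trace) := fun _ => rfl
  by_cases hij : i = j
  · subst hij
    rw [LinearMap.add_apply, LinearMap.smul_apply, Matrix.add_apply, Matrix.smul_apply, he,
      hq B, hq, Matrix.smul_apply, Matrix.diagonal_apply_eq, Matrix.diagonal_apply_eq,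
      Matrix.diagonal_apply_eq, htr i]
    push_cast
    simp only [smul_eq_mul]
    ring
  · rw [LinearMap.add_apply, LinearMap.smul_apply, Matrix.add_apply, Matrix.smul_apply, he,
      hq B, hq, Matrix.smul_apply, Matrix.diagonal_apply_ne _ hij, Matrix.diagonal_apply_ne _ hij,
      Matrix.diagonal_apply_ne _ hij]
    simp

end DDNAux

end AuxLemmas

open DDNAux in
theorem dualDiamondNorm_qcMap {n k : ℕ} (B : Fin n → Mat (Fin k))
    (hB : ∀ i, (B i).IsHermitian) :
    dualDiamondNorm (qcMap B) = ∑ i, ‖B i‖ := by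
  classical
  rw [dualDiamondNorm]
  by_cases hn : n = 0
  · subst hn
    have hempty : {r : ℝ | 0 < r ∧ ∃ σ : Mat (Fin 0), IsState σ ∧
        IsCP ((r : ℂ) • erasure (ι := Fin k) σ - qcMap B) ∧
        IsCP ((r : ℂ) • erasure (ι := Fin k) σ + qcMap B)} = ∅ := by
      apply Set.eq_empty_iff_forall_notMem.2
      rintro r ⟨hr, σ, ⟨hσ1, hσ2⟩, -⟩
      rw [Matrix.trace] at hσ2
      simp at hσ2
    rw [hempty, Real.sInf_empty]
    simp
  · have hnpos : (0 : ℝ) < n := by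
      exact_mod_cast Nat.pos_of_ne_zero hn
    set S := ∑ i, ‖B i‖ with hS
    have hS0 : 0 ≤ S := Finset.sum_nonneg fun i _ => norm_nonneg _
    set E := {r : ℝ | 0 < r ∧ ∃ σ : Mat (Fin n), IsState σ ∧
        IsCP ((r : ℂ) • erasure (ι := Fin k) σ - qcMap B) ∧
        IsCP ((r : ℂ) • erasure (ι := Fin k) σ + qcMap B)} with hE
    have hmem : ∀ ε : ℝ, 0 < ε → S + ε ∈ E := by
      intro ε hε
      have hrpos : (0 : ℝ) < S + ε := by linarith
      set d : Fin n → ℝ := fun i => (‖B i‖ + ε / n) / (S + ε) with hd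
      have hd0 : ∀ i, 0 ≤ d i := by
        intro i
        apply div_nonneg _ hrpos.le
        have : 0 < ε / n := by positivity
        have := norm_nonneg (B i)
        linarith
      have hrd : ∀ i, (S + ε) * d i = ‖B i‖ + ε / n := by
        intro i
        rw [hd]
        rw [mul_comm, div_mul_cancel₀ _ (ne_of_gt hrpos)]
      have hsum : ∑ i, d i = 1 := by
        rw [hd]
        rw [← Finset.sum_div, Finset.sum_add_distrib, Finset.sum_const, Finset.card_univ,
          Fintype.card_fin, nsmul_eq_mul, mul_div_cancel₀ _ (ne_of_gt hnpos), ← hS]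
        exact div_self (ne_of_gt hrpos)
      refine ⟨hrpos, Matrix.diagonal (fun i => ((d i : ℝ) : ℂ)), ⟨?_, ?_⟩, ?_, ?_⟩
      · exact Matrix.posSemidef_diagonal_iff.2 fun i => Complex.zero_le_real.2 (hd0 i)
      · rw [Matrix.trace_diagonal]
        rw [← Complex.ofReal_sum, hsum, Complex.ofReal_one]
      · have heq : ((S + ε : ℝ) : ℂ) • erasure (ι := Fin k)
            (Matrix.diagonal fun i => ((d i : ℝ) : ℂ)) - qcMap B
            = qcMap (fun i => (((S + ε) * d i : ℝ) : ℂ) • (1 : Mat (Fin k)) + (-B i)) := by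
          rw [sub_eq_add_neg, ← DDNAux.qcMap_neg, DDNAux.comb_eq]
        rw [heq]
        apply DDNAux.isCP_qcMap
        intro i
        apply DDNAux.posSemidef_smul_one_add (hB i).neg
        rw [norm_neg, hrd i]
        have : 0 < ε / n := by positivity
        linarith
      · have heq : ((S + ε : ℝ) : ℂ) • erasure (ι := Fin k)
            (Matrix.diagonal fun i => ((d i : ℝ) : ℂ)) + qcMap B
            = qcMap (fun i => (((S + ε) * d i : ℝ) : ℂ) • (1 : Mat (Fin k)) + B i) := by
          rw [DDNAux.comb_eq]
        rw [heq]
        apply DDNAux.isCP_qcMap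
        intro i
        apply DDNAux.posSemidef_smul_one_add (hB i)
        rw [hrd i]
        have : 0 < ε / n := by positivity
        linarith
    have hlb : ∀ r ∈ E, S ≤ r := by
      rintro r ⟨hr, σ, ⟨hσpsd, hσtr⟩, hm, hp⟩
      have key : ∀ i, ‖B i‖ ≤ r * (σ i i).re := by
        intro i
        have hσii : 0 ≤ (σ i i).re := by
          have h0 := DDNAux.psd_diag_nonneg hσpsd i
          exact (Complex.le_def.1 h0).1
        by_cases hk : k = 0
        · have hBz : B i = 0 := by
            subst hk
            ext a b
            exact a.elim0
          rw [hBz, norm_zero]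
          exact mul_nonneg hr.le hσii
        · obtain ⟨v, hv1, lam, hquad, hnorm⟩ :=
            DDNAux.exists_unit_quad (Nat.pos_of_ne_zero hk) (hB i)
          set X := Matrix.vecMulVec v (star v) with hX
          have hXpsd : X.PosSemidef := DDNAux.posSemidef_vecMulVec v
          have hXtr : X.trace = 1 := by
            have e : X.trace = star v ⬝ᵥ v := by
              simp [hX, Matrix.trace, Matrix.diag, Matrix.vecMulVec_apply, dotProduct,
                mul_comm]
            rw [e, hv1]
          have hXB : (X * B i).trace = (lam : ℂ) := by
            rw [hX, DDNAux.trace_vecMulVec_mul, hquad]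
          have hentm : (((r : ℂ) • erasure (ι := Fin k) σ - qcMap B) X) i i
              = (r : ℂ) * σ i i - (lam : ℂ) := by
            rw [LinearMap.sub_apply, LinearMap.smul_apply, Matrix.sub_apply, Matrix.smul_apply,
              show (erasure (ι := Fin k) σ) X = X.trace • σ from rfl,
              show (qcMap B) X = Matrix.diagonal (fun i' => (X * B i').trace) from rfl,
              Matrix.smul_apply, Matrix.diagonal_apply_eq, hXtr, one_smul, hXB, smul_eq_mul]
          have hentp : (((r : ℂ) • erasure (ι := Fin k) σ + qcMap B) X) i i
              = (r : ℂ) * σ i i + (lam : ℂ) := by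
            rw [LinearMap.add_apply, LinearMap.smul_apply, Matrix.add_apply, Matrix.smul_apply,
              show (erasure (ι := Fin k) σ) X = X.trace • σ from rfl,
              show (qcMap B) X = Matrix.diagonal (fun i' => (X * B i').trace) from rfl,
              Matrix.smul_apply, Matrix.diagonal_apply_eq, hXtr, one_smul, hXB, smul_eq_mul]
          have hm' := DDNAux.psd_diag_nonneg (DDNAux.isCP_posSemidef hm hXpsd) i
          have hp' := DDNAux.psd_diag_nonneg (DDNAux.isCP_posSemidef hp hXpsd) i
          rw [hentm] at hm'
          rw [hentp] at hp'
          have hm'' : 0 ≤ r * (σ i i).re - lam := by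
            have := (Complex.le_def.1 hm').1
            simpa [Complex.sub_re, Complex.re_ofReal_mul] using this
          have hp'' : 0 ≤ r * (σ i i).re + lam := by
            have := (Complex.le_def.1 hp').1
            simpa [Complex.add_re, Complex.re_ofReal_mul] using this
          have : |lam| ≤ r * (σ i i).re := abs_le.2 ⟨by linarith, by linarith⟩
          linarith
      have htrre : ∑ i, (σ i i).re = 1 := by
        have h1 : (Matrix.trace σ).re = 1 := by
          rw [hσtr]
          simp
        rw [Matrix.trace] at h1
        rw [← h1, Complex.re_sum]
        rfl
      calc S ≤ ∑ i, r * (σ i i).re := Finset.sum_le_sum fun i _ => key i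
        _ = r * ∑ i, (σ i i).re := by rw [Finset.mul_sum]
        _ = r := by rw [htrre, mul_one]
    have hne : E.Nonempty := ⟨S + 1, hmem 1 one_pos⟩
    have hbdd : BddBelow E := ⟨S, fun r hr => hlb r hr⟩
    refine le_antisymm ?_ (le_csInf hne hlb)
    exact le_of_forall_pos_le_add fun ε hε => csInf_le hbdd (hmem ε hε)
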